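/- Let d ≥ 1, let q ≥ 1 be an integer, and let x ∈ ℝ^d with x_max = max_i |x_i|, x_min = min_i |x_i| and x_max > x_min. For each i set u_i = (|x_i| − x_min)/(x_max − x_min), let l_i be an integer with 0 ≤ l_i ≤ q−1 and l_i/q ≤ u_i ≤ (l_i+1)/q, and p_i = q·u_i − l_i. Then the expected squared Euclidean norm of the quantized vector satisfies Σ_{i=1}^d [ (1−p_i)·(sign(x_i)·(x_min + (x_max−x_min)·l_i/q))² + p_i·(sign(x_i)·(x_min + (x_max−x_min)·(l_i+1)/q))² ] ≤ Σ_{i=1}^d x_i² + d·(x_max − x_min)²/(4q²); equivalently, E‖Q(x,q)‖₂² ≤ ‖x‖₂² + ε·d·‖x‖₂²/(4q²) where ε = (x_max − x_min)²/‖x‖₂². -/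

import Mathlib

set_option maxHeartbeats 1000000 in
/-- second-moment bound for the stochastic quantizer,
E‖Q(x,q)‖₂² ≤ ‖x‖₂² + ε·d·‖x‖₂²/(4q²) with ε = (x_max − x_min)²/‖x‖₂². -/
theorem stmt_2 (d q : ℕ) (hd : 1 ≤ d) (hq : 1 ≤ q)
    (x : Fin d → ℝ) (xmax xmin : ℝ)
    (hmax : IsGreatest (Set.range fun i => |x i|) xmax)
    (hmin : IsLeast (Set.range fun i => |x i|) xmin)
    (hlt : xmin < xmax)
    (u : Fin d → ℝ) (hu : ∀ i, u i = (|x i| - xmin) / (xmax - xmin))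
    (l : Fin d → ℕ) (hl : ∀ i, l i ≤ q - 1)
    (hl1 : ∀ i, (l i : ℝ) / q ≤ u i) (hl2 : ∀ i, u i ≤ ((l i : ℝ) + 1) / q)
    (p : Fin d → ℝ) (hp : ∀ i, p i = q * u i - l i) :
    ∑ i, ((1 - p i) * (Real.sign (x i) * (xmin + (xmax - xmin) * ((l i : ℝ) / q))) ^ 2
          + p i * (Real.sign (x i) * (xmin + (xmax - xmin) * (((l i : ℝ) + 1) / q))) ^ 2)
      ≤ ∑ i, x i ^ 2 + (d : ℝ) * (xmax - xmin) ^ 2 / (4 * q ^ 2) := by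
  have hq0 : (0:ℝ) < q := by exact_mod_cast Nat.lt_of_lt_of_le Nat.zero_lt_one hq
  have hΔ : (0:ℝ) < xmax - xmin := by linarith
  have key : ∀ i, (1 - p i) * (Real.sign (x i) * (xmin + (xmax - xmin) * ((l i : ℝ) / q))) ^ 2
          + p i * (Real.sign (x i) * (xmin + (xmax - xmin) * (((l i : ℝ) + 1) / q))) ^ 2
        ≤ x i ^ 2 + (xmax - xmin) ^ 2 / (4 * q ^ 2) := by
    intro i
    set Δ := xmax - xmin with hΔdef
    have hXu : |x i| = xmin + Δ * u i := by
      rw [hu i]; field_simp; ring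
    have hp0 : 0 ≤ p i := by
      have := (div_le_iff₀ hq0).mp (hl1 i)
      rw [hp i]; linarith
    have hp1 : p i ≤ 1 := by
      have := (le_div_iff₀ hq0).mp (hl2 i)
      rw [hp i]; linarith
    set A := xmin + Δ * ((l i : ℝ) / q) with hA
    set B := xmin + Δ * (((l i : ℝ) + 1) / q) with hB
    have hBA : B = A + Δ / q := by rw [hA, hB]; ring
    have hXA : |x i| = A + p i * (Δ / q) := by
      rw [hXu, hA, hp i]; field_simp; ring
    have hid : (1 - p i) * A ^ 2 + p i * B ^ 2
        = |x i| ^ 2 + p i * (1 - p i) * (Δ / q) ^ 2 := by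
      rw [hBA, hXA]; ring
    have hs : Real.sign (x i) ^ 2 ≤ 1 := by
      rcases Real.sign_apply_eq (x i) with h | h | h <;> rw [h] <;> norm_num
    have hnn : 0 ≤ |x i| ^ 2 + p i * (1 - p i) * (Δ / q) ^ 2 := by
      have := sq_nonneg (Δ / q)
      nlinarith [sq_nonneg (|x i|)]
    have h1 : (1 - p i) * (Real.sign (x i) * A) ^ 2 + p i * (Real.sign (x i) * B) ^ 2
        = Real.sign (x i) ^ 2 * ((1 - p i) * A ^ 2 + p i * B ^ 2) := by ring
    rw [h1, hid]
    have h2 : Real.sign (x i) ^ 2 * (|x i| ^ 2 + p i * (1 - p i) * (Δ / q) ^ 2)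
        ≤ |x i| ^ 2 + p i * (1 - p i) * (Δ / q) ^ 2 :=
      mul_le_of_le_one_left hnn hs
    have h3 : p i * (1 - p i) ≤ 1 / 4 := by nlinarith [sq_nonneg (p i - 1/2)]
    have h4 : p i * (1 - p i) * (Δ / q) ^ 2 ≤ (1/4) * (Δ/q)^2 := by
      nlinarith [sq_nonneg (Δ / q)]
    have h5 : (1/4 : ℝ) * (Δ/q)^2 = Δ ^ 2 / (4 * q ^ 2) := by
      field_simp
    have := sq_abs (x i)
    linarith
  calc ∑ i, ((1 - p i) * (Real.sign (x i) * (xmin + (xmax - xmin) * ((l i : ℝ) / q))) ^ 2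
          + p i * (Real.sign (x i) * (xmin + (xmax - xmin) * (((l i : ℝ) + 1) / q))) ^ 2)
      ≤ ∑ i : Fin d, (x i ^ 2 + (xmax - xmin) ^ 2 / (4 * q ^ 2)) :=
        Finset.sum_le_sum fun i _ => key i
    _ = ∑ i, x i ^ 2 + (d : ℝ) * (xmax - xmin) ^ 2 / (4 * q ^ 2) := by
        rw [Finset.sum_add_distrib, Finset.sum_const, Finset.card_univ, Fintype.card_fin]
        push_cast; ring
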